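/- (Quantum Representation Theorem, uniqueness part) If a likelihood ordering on a weight-rich set of quantum measurements satisfies transitivity, dominance, separation, and equivalence, and Pr is any function representing the ordering, then Pr(E|M) = W_M(E) for every measurement M and event E of M. -/

import Mathlib

/-- A quantum measurement: a finite outcome set with an additive,
normalized, nonnegative weight function on events (subsets of outcomes). -/
structure Measurement where
  S : Finset ℕ
  W : Finset ℕ → ℝ
  nonneg : ∀ E, 0 ≤ W E
  emptyW : W ∅ = 0
  totalW : W S = 1
  addW : ∀ E F : Finset ℕ, E ⊆ S → F ⊆ S → Disjoint E F → W (E ∪ F) = W E + W F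

/-- A likelihood ordering on event–measurement pairs. -/
abbrev LOrder := (Finset ℕ × Measurement) → (Finset ℕ × Measurement) → Prop

/-- E|M ≃ F|N : both directions of the likelihood ordering hold. -/
def lequiv (R : LOrder) (a b : Finset ℕ × Measurement) : Prop := R a b ∧ R b a

/-- E is null with respect to M. -/
def IsNull (R : LOrder) (E : Finset ℕ) (M : Measurement) : Prop := lequiv R (E, M) (∅, M)

/-- Transitivity axiom. -/
def TransAx (R : LOrder) : Prop := ∀ a b c, R a b → R b c → R a c

/-- Dominance axiom. -/
def DominanceAx (R : LOrder) : Prop :=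
  ∀ (M : Measurement) (E F : Finset ℕ), E ⊆ F → F ⊆ M.S →
    R (F, M) (E, M) ∧ (lequiv R (F, M) (E, M) ↔ IsNull R (F \ E) M)

/-- Separation axiom: some event is not null. -/
def SeparationAx (R : LOrder) : Prop :=
  ∃ (E : Finset ℕ) (M : Measurement), E ⊆ M.S ∧ ¬ IsNull R E M

/-- Equivalence axiom: equal weight implies equal likelihood. -/
def EquivalenceAx (R : LOrder) : Prop :=
  ∀ (M N : Measurement) (E F : Finset ℕ), E ⊆ M.S → F ⊆ N.S →
    M.W E = N.W F → lequiv R (E, M) (F, N)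

/-- Weight-richness: every finite list of positive reals summing to 1 is
realized as the singleton-outcome weights of some measurement. -/
def Rich : Prop :=
  ∀ (n : ℕ) (w : Fin n → ℝ), (∀ i, 0 < w i) → (∑ i, w i) = 1 →
    ∃ (M : Measurement) (e : Fin n ↪ ℕ),
      M.S = Finset.univ.map e ∧ ∀ i, M.W {e i} = w i

/-- `Pr` represents the likelihood ordering `R`. -/
def Represents (R : LOrder) (Pr : Finset ℕ × Measurement → ℝ) : Prop :=
  (∀ M : Measurement, Pr (∅, M) = 0) ∧
  (∀ M : Measurement, Pr (M.S, M) = 1) ∧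
  (∀ (M : Measurement) (E F : Finset ℕ), E ⊆ M.S → F ⊆ M.S → Disjoint E F →
      Pr (E ∪ F, M) = Pr (E, M) + Pr (F, M)) ∧
  (∀ a b : Finset ℕ × Measurement, a.1 ⊆ a.2.S → b.1 ⊆ b.2.S →
      (Pr a ≥ Pr b ↔ R a b))

/-- An additive set function with value 0 on ∅ is the sum of its singleton values. -/
lemma sum_singletons (W : Finset ℕ → ℝ) (S : Finset ℕ) (h0 : W ∅ = 0)
    (hadd : ∀ E F : Finset ℕ, E ⊆ S → F ⊆ S → Disjoint E F → W (E ∪ F) = W E + W F) :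
    ∀ E : Finset ℕ, E ⊆ S → W E = ∑ x ∈ E, W {x} := by
  intro E
  induction E using Finset.induction_on with
  | empty => intro _; simpa using h0
  | insert a s hnotmem ih =>
    intro hsub
    have ha : a ∈ S := hsub (Finset.mem_insert_self a s)
    have hs : s ⊆ S := (Finset.insert_subset_iff.mp hsub).2
    have hdisj : Disjoint ({a} : Finset ℕ) s := Finset.disjoint_singleton_left.mpr hnotmem
    have hW : W (insert a s) = W {a} + W s := by
      rw [Finset.insert_eq]
      exact hadd {a} s (Finset.singleton_subset_iff.mpr ha) hs hdisj
    rw [hW, ih hs, Finset.sum_insert hnotmem]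

/-- Quantum representation theorem, uniqueness: any representing function is the weight. -/
theorem stmt4 (R : LOrder) (hT : TransAx R) (hD : DominanceAx R)
    (hS : SeparationAx R) (hE : EquivalenceAx R) (hR : Rich)
    (Pr : Finset ℕ × Measurement → ℝ) (hPr : Represents R Pr) :
    ∀ (M : Measurement) (E : Finset ℕ), E ⊆ M.S → Pr (E, M) = M.W E := by
  obtain ⟨hPr0, hPr1, hPradd, hPrmono⟩ := hPr
  -- equal weight ⇒ equal Pr
  have hEq : ∀ (M N : Measurement) (E F : Finset ℕ), E ⊆ M.S → F ⊆ N.S →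
      M.W E = N.W F → Pr (E, M) = Pr (F, N) := by
    intro M N E F hEM hFN hW
    have h := hE M N E F hEM hFN hW
    have h1 := (hPrmono (E, M) (F, N) hEM hFN).mpr h.1
    have h2 := (hPrmono (F, N) (E, M) hFN hEM).mpr h.2
    linarith
  -- Pr is nonnegative
  have hNN : ∀ (M : Measurement) (E : Finset ℕ), E ⊆ M.S → 0 ≤ Pr (E, M) := by
    intro M E hEM
    have h := (hD M ∅ E (Finset.empty_subset E) hEM).1
    have h2 := (hPrmono (E, M) (∅, M) hEM (Finset.empty_subset _)).mpr h
    simpa [hPr0 M] using h2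
  -- rational weights are pinned down
  have hRat : ∀ q : ℚ, 0 < q → q < 1 →
      ∃ (M : Measurement) (E : Finset ℕ), E ⊆ M.S ∧ M.W E = (q : ℝ) ∧ Pr (E, M) = (q : ℝ) := by
    intro q hq0 hq1
    set n := q.den with hn_def
    set k := q.num.toNat with hk_def
    have hn : 0 < n := q.pos
    have hnum : 0 < q.num := Rat.num_pos.mpr hq0
    have hkn : k < n := by
      have h := Rat.lt_one_iff_num_lt_denom.mpr hq1
      omega
    have hqcast : (q : ℝ) = (k : ℝ) / (n : ℝ) := by
      rw [Rat.cast_def]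
      congr 1
      · rw [hk_def]
        exact_mod_cast (Int.toNat_of_nonneg hnum.le).symm
    obtain ⟨M, e, hMS, hMw⟩ := hR n (fun _ => (n : ℝ)⁻¹)
      (fun _ => by positivity)
      (by
        rw [Finset.sum_const, Finset.card_univ, Fintype.card_fin, nsmul_eq_mul]
        exact mul_inv_cancel₀ (by positivity))
    -- all singletons have equal Pr, call it p
    have hmem : ∀ i : Fin n, {e i} ⊆ M.S := by
      intro i
      rw [hMS, Finset.singleton_subset_iff, Finset.mem_map]
      exact ⟨i, Finset.mem_univ i, rfl⟩
    set i0 : Fin n := ⟨0, hn⟩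
    set p := Pr ({e i0}, M) with hp_def
    have hpeq : ∀ i : Fin n, Pr ({e i}, M) = p := by
      intro i
      exact hEq M M {e i} {e i0} (hmem i) (hmem i0) (by rw [hMw i, hMw i0])
    -- sum of Pr over singletons of S equals 1
    have hPrsum : Pr (M.S, M) = ∑ x ∈ M.S, Pr ({x}, M) :=
      sum_singletons (fun A => Pr (A, M)) M.S (hPr0 M)
        (fun A B hA hB hAB => hPradd M A B hA hB hAB) M.S (subset_refl _)
    rw [hPr1 M, hMS, Finset.sum_map] at hPrsum
    have hPrsum' : (1 : ℝ) = (n : ℝ) * p := by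
      rw [hPrsum]
      rw [Finset.sum_congr rfl (fun i _ => hpeq i), Finset.sum_const, Finset.card_univ,
        Fintype.card_fin, nsmul_eq_mul]
    have hp : p = (n : ℝ)⁻¹ := by
      field_simp at hPrsum' ⊢
      linarith
    -- the event: image under e of the first k outcomes
    set A : Finset ℕ := (Finset.Iio (⟨k, hkn⟩ : Fin n)).map e with hA_def
    have hAS : A ⊆ M.S := by
      rw [hA_def, hMS]
      exact Finset.map_subset_map.mpr (Finset.subset_univ _)
    have hcard : (Finset.Iio (⟨k, hkn⟩ : Fin n)).card = k := Fin.card_Iio (⟨k, hkn⟩ : Fin n)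
    have hWsum := sum_singletons M.W M.S M.emptyW M.addW A hAS
    have hWA : M.W A = (q : ℝ) := by
      rw [hWsum, hA_def, Finset.sum_map]
      rw [Finset.sum_congr rfl (fun i _ => hMw i), Finset.sum_const, hcard, nsmul_eq_mul,
        hqcast]
      field_simp
    have hPsum : Pr (A, M) = ∑ x ∈ A, Pr ({x}, M) :=
      sum_singletons (fun B => Pr (B, M)) M.S (hPr0 M)
        (fun B C hB hC hBC => hPradd M B C hB hC hBC) A hAS
    have hPA : Pr (A, M) = (q : ℝ) := by
      rw [hPsum, hA_def, Finset.sum_map]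
      rw [Finset.sum_congr rfl (fun i _ => hpeq i), Finset.sum_const, hcard, nsmul_eq_mul,
        hp, hqcast]
      field_simp
    exact ⟨M, A, hAS, hWA, hPA⟩
  -- main argument
  intro M E hEM
  have hw0 : 0 ≤ M.W E := M.nonneg E
  have hsplit : M.W M.S = M.W E + M.W (M.S \ E) := by
    rw [← M.addW E (M.S \ E) hEM (Finset.sdiff_subset) Finset.disjoint_sdiff,
      Finset.union_sdiff_of_subset hEM]
  have hw1 : M.W E ≤ 1 := by
    have := M.nonneg (M.S \ E)
    rw [M.totalW] at hsplit
    linarith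
  rcases eq_or_lt_of_le hw0 with h0 | h0
  · -- weight 0
    have heq : Pr (E, M) = Pr (∅, M) :=
      hEq M M E ∅ hEM (Finset.empty_subset _) (by rw [M.emptyW, ← h0])
    rw [heq, hPr0, ← h0]
  rcases eq_or_lt_of_le hw1 with h1 | h1
  · -- weight 1
    have heq : Pr (E, M) = Pr (M.S, M) :=
      hEq M M E M.S hEM (subset_refl _) (by rw [M.totalW, h1])
    rw [heq, hPr1, h1]
  -- 0 < W E < 1
  set w := M.W E with hw_def
  -- Pr (E, M) ≤ 1
  have hPrsplit : Pr (M.S, M) = Pr (E, M) + Pr (M.S \ E, M) := by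
    rw [← hPradd M E (M.S \ E) hEM (Finset.sdiff_subset) Finset.disjoint_sdiff,
      Finset.union_sdiff_of_subset hEM]
  have hPle1 : Pr (E, M) ≤ 1 := by
    have := hNN M (M.S \ E) (Finset.sdiff_subset)
    rw [hPr1] at hPrsplit
    linarith
  have hPge0 : 0 ≤ Pr (E, M) := hNN M E hEM
  -- lower bound by rationals below w
  have hlb : ∀ q : ℚ, 0 < (q : ℝ) → (q : ℝ) < w → (q : ℝ) ≤ Pr (E, M) := by
    intro q hq0 hqw
    obtain ⟨N, e, hNS, hNw⟩ := hR 3 ![ (q : ℝ), w - (q : ℝ), 1 - w ]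
      (by intro i
          fin_cases i
          · simpa using hq0
          · simpa using (show (0 : ℝ) < w - (q : ℝ) by linarith)
          · simpa using (show (0 : ℝ) < 1 - w by linarith))
      (by rw [Fin.sum_univ_three]
          simp only [Matrix.cons_val_zero, Matrix.cons_val_one, Matrix.head_cons,
            Matrix.cons_val_two, Matrix.tail_cons]
          ring)
    have hmem : ∀ i : Fin 3, e i ∈ N.S := by
      intro i
      rw [hNS, Finset.mem_map]
      exact ⟨i, Finset.mem_univ i, rfl⟩
    have hne : e 0 ≠ e 1 := fun h => by simpa using e.injective h
    have hB : ({e 0, e 1} : Finset ℕ) = {e 0} ∪ {e 1} := rfl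
    have hBsub : ({e 0, e 1} : Finset ℕ) ⊆ N.S := by
      intro x hx
      rcases Finset.mem_insert.mp hx with h | h
      · exact h ▸ hmem 0
      · exact (Finset.mem_singleton.mp h) ▸ hmem 1
    have hWB : N.W {e 0, e 1} = w := by
      rw [hB, N.addW {e 0} {e 1} (Finset.singleton_subset_iff.mpr (hmem 0))
        (Finset.singleton_subset_iff.mpr (hmem 1)) (by simpa using hne),
        hNw 0, hNw 1]
      simp
    have hPB : Pr ({e 0, e 1}, N) = Pr (E, M) :=
      hEq N M {e 0, e 1} E hBsub hEM (by rw [hWB])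
    have hPBadd : Pr ({e 0, e 1}, N) = Pr ({e 0}, N) + Pr ({e 1}, N) := by
      rw [hB]
      exact hPradd N {e 0} {e 1} (Finset.singleton_subset_iff.mpr (hmem 0))
        (Finset.singleton_subset_iff.mpr (hmem 1)) (by simpa using hne)
    -- Pr ({e 0}, N) = q via the rational lemma
    have hq1 : q < 1 := by
      have : (q : ℝ) < 1 := hqw.trans h1
      exact_mod_cast this
    obtain ⟨M', A, hAS, hWA, hPA⟩ := hRat q (by exact_mod_cast hq0) hq1
    have hP0 : Pr ({e 0}, N) = (q : ℝ) := by
      rw [hEq N M' {e 0} A (Finset.singleton_subset_iff.mpr (hmem 0)) hAS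
        (by rw [hNw 0, hWA]; simp), hPA]
    have hP1nn : 0 ≤ Pr ({e 1}, N) :=
      hNN N {e 1} (Finset.singleton_subset_iff.mpr (hmem 1))
    linarith [hPB, hPBadd, hP0, hP1nn]
  -- upper bound by rationals above w
  have hub : ∀ q : ℚ, w < (q : ℝ) → (q : ℝ) < 1 → Pr (E, M) ≤ (q : ℝ) := by
    intro q hwq hq1
    obtain ⟨N, e, hNS, hNw⟩ := hR 3 ![ w, (q : ℝ) - w, 1 - (q : ℝ) ]
      (by intro i
          fin_cases i
          · simpa using h0
          · simpa using (show (0 : ℝ) < (q : ℝ) - w by linarith)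
          · simpa using (show (0 : ℝ) < 1 - (q : ℝ) by linarith))
      (by rw [Fin.sum_univ_three]
          simp only [Matrix.cons_val_zero, Matrix.cons_val_one, Matrix.head_cons,
            Matrix.cons_val_two, Matrix.tail_cons]
          ring)
    have hmem : ∀ i : Fin 3, e i ∈ N.S := by
      intro i
      rw [hNS, Finset.mem_map]
      exact ⟨i, Finset.mem_univ i, rfl⟩
    have hne : e 0 ≠ e 1 := fun h => by simpa using e.injective h
    have hB : ({e 0, e 1} : Finset ℕ) = {e 0} ∪ {e 1} := rfl
    have hBsub : ({e 0, e 1} : Finset ℕ) ⊆ N.S := by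
      intro x hx
      rcases Finset.mem_insert.mp hx with h | h
      · exact h ▸ hmem 0
      · exact (Finset.mem_singleton.mp h) ▸ hmem 1
    have hWB : N.W {e 0, e 1} = (q : ℝ) := by
      rw [hB, N.addW {e 0} {e 1} (Finset.singleton_subset_iff.mpr (hmem 0))
        (Finset.singleton_subset_iff.mpr (hmem 1)) (by simpa using hne),
        hNw 0, hNw 1]
      simp
    have hq0 : (0 : ℚ) < q := by
      have : (0 : ℝ) < (q : ℝ) := h0.trans hwq
      exact_mod_cast this
    have hq1' : q < 1 := by exact_mod_cast hq1
    obtain ⟨M', A, hAS, hWA, hPA⟩ := hRat q hq0 hq1'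
    have hPB : Pr ({e 0, e 1}, N) = (q : ℝ) := by
      rw [hEq N M' {e 0, e 1} A hBsub hAS (by rw [hWB, hWA]), hPA]
    have hPBadd : Pr ({e 0, e 1}, N) = Pr ({e 0}, N) + Pr ({e 1}, N) := by
      rw [hB]
      exact hPradd N {e 0} {e 1} (Finset.singleton_subset_iff.mpr (hmem 0))
        (Finset.singleton_subset_iff.mpr (hmem 1)) (by simpa using hne)
    have hP0 : Pr ({e 0}, N) = Pr (E, M) :=
      hEq N M {e 0} E (Finset.singleton_subset_iff.mpr (hmem 0)) hEM
        (by rw [hNw 0]; simp [hw_def])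
    have hP1nn : 0 ≤ Pr ({e 1}, N) :=
      hNN N {e 1} (Finset.singleton_subset_iff.mpr (hmem 1))
    linarith [hPB, hPBadd, hP0, hP1nn]
  -- squeeze
  by_contra hne
  rcases lt_or_gt_of_ne hne with hlt | hgt
  · obtain ⟨q, hq1, hq2⟩ := exists_rat_btwn hlt
    have hq0 : 0 < (q : ℝ) := lt_of_le_of_lt hPge0 hq1
    exact absurd (hlb q hq0 hq2) (not_le.mpr hq1)
  · obtain ⟨q, hq1, hq2⟩ := exists_rat_btwn hgt
    have hq1' : (q : ℝ) < 1 := lt_of_lt_of_le hq2 hPle1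
    exact absurd (hub q hq1 hq1') (not_le.mpr hq2)
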